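/- Let A_n ∈ ℝ^{d×d}, n ∈ ℕ, be invertible matrices with solution operator Φ, and let V, W ⊆ ℝ^d be subspaces with dim V = dim W = s. Assume there exist constants C ≥ 0, q ∈ [0,1) and an index J ∈ ℕ such that ∠(Φ(j,0)V, Φ(j,0)W) ≤ C q^j for all j ≥ J. Then with a_{1,n}(U) := Σ_{j=1}^{n} ∠(Φ(j−1,0)U, Φ(j,0)U) one has limsup_{n→∞} (1/n) a_{1,n}(V) = limsup_{n→∞} (1/n) a_{1,n}(W), and the same identity holds with liminf in place of limsup. -/

import Mathlib

open Filter

noncomputable section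

abbrev Euc (d : ℕ) := EuclideanSpace ℝ (Fin d)

/-- Angle between the lines spanned by two vectors. -/
noncomputable def vecAngle {d : ℕ} (v w : Euc d) : ℝ :=
  Real.arccos (|(inner ℝ v w : ℝ)| / (‖v‖ * ‖w‖))

/-- Largest principal angle between two subspaces of equal dimension. -/
noncomputable def subAngle {d : ℕ} (V W : Submodule ℝ (Euc d)) : ℝ :=
  Real.arccos (sInf {c : ℝ | ∃ v ∈ V, ‖v‖ = 1 ∧
    c = sSup {r : ℝ | ∃ w ∈ W, ‖w‖ = 1 ∧ r = (inner ℝ v w : ℝ)}})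

/-- Forward product `A (m+n-1) ⋯ A m`. -/
noncomputable def PhiF {d : ℕ} (A : ℕ → (Euc d →L[ℝ] Euc d)) (m : ℕ) : ℕ → (Euc d →L[ℝ] Euc d)
  | 0 => 1
  | n + 1 => A (m + n) ∘L PhiF A m n

/-- Solution operator `Φ(n,m) = A_{n-1} ⋯ A_m` for `n ≥ m`,
`Φ(n,m) = A_n⁻¹ ⋯ A_{m-1}⁻¹` for `n < m`. -/
noncomputable def Phi {d : ℕ} (A : ℕ → (Euc d →L[ℝ] Euc d)) (n m : ℕ) : Euc d →L[ℝ] Euc d :=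
  if m ≤ n then PhiF A m (n - m) else Ring.inverse (PhiF A n (m - n))

/-- `a_{m,n}(V) = Σ_{j=m}^n ∠(Φ(j-1,0)V, Φ(j,0)V)`. -/
noncomputable def angSum {d : ℕ} (A : ℕ → (Euc d →L[ℝ] Euc d)) (V : Submodule ℝ (Euc d))
    (m n : ℕ) : ℝ :=
  ∑ j ∈ Finset.Icc m n, subAngle (V.map (Phi A (j - 1) 0 : Euc d →ₗ[ℝ] Euc d)) (V.map (Phi A j 0 : Euc d →ₗ[ℝ] Euc d))

namespace AngleAux

variable {d : ℕ}

lemma arccos_anti {x y : ℝ} (h : x ≤ y) : Real.arccos y ≤ Real.arccos x := by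
  simp only [Real.arccos_eq_pi_div_two_sub_arcsin]
  have := Real.monotone_arcsin h
  linarith

lemma exists_unit {V : Submodule ℝ (Euc d)} (hV : V ≠ ⊥) : ∃ v ∈ V, ‖v‖ = 1 := by
  obtain ⟨x, hxV, hx0⟩ := Submodule.exists_mem_ne_zero_of_ne_bot hV
  refine ⟨‖x‖⁻¹ • x, V.smul_mem _ hxV, ?_⟩
  have : ‖x‖ ≠ 0 := norm_ne_zero_iff.2 hx0
  rw [norm_smul, norm_inv, norm_norm]
  field_simp

lemma inner_proj (W : Submodule ℝ (Euc d)) (v w : Euc d) (hw : w ∈ W) :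
    (inner ℝ v w : ℝ) = inner ℝ ((Submodule.orthogonalProjectionOnto W v : Euc d)) w := by
  have h : inner ℝ (v - (Submodule.orthogonalProjectionOnto W v : Euc d)) w = 0 :=
    W.starProjection_inner_eq_zero v w hw
  rw [inner_sub_left] at h
  linarith

lemma norm_proj_le (W : Submodule ℝ (Euc d)) (v : Euc d) :
    ‖(Submodule.orthogonalProjectionOnto W v : Euc d)‖ ≤ ‖v‖ := by
  have h1 : ‖Submodule.orthogonalProjectionOnto W v‖ ≤ ‖Submodule.orthogonalProjectionOnto W‖ * ‖v‖ :=
    (Submodule.orthogonalProjectionOnto W).le_opNorm v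
  have h2 : ‖Submodule.orthogonalProjectionOnto W‖ ≤ 1 := Submodule.orthogonalProjectionOnto_norm_le W
  have h3 : ‖(Submodule.orthogonalProjectionOnto W v : Euc d)‖ = ‖Submodule.orthogonalProjectionOnto W v‖ := rfl
  nlinarith [norm_nonneg v, norm_nonneg (Submodule.orthogonalProjectionOnto W v)]

lemma inner_self_proj (W : Submodule ℝ (Euc d)) (v : Euc d) :
    (inner ℝ v ((Submodule.orthogonalProjectionOnto W v : Euc d)) : ℝ)
      = ‖(Submodule.orthogonalProjectionOnto W v : Euc d)‖ ^ 2 := by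
  rw [inner_proj W v _ (Submodule.orthogonalProjectionOnto W v).2, real_inner_self_eq_norm_sq]

lemma sSup_inner {W : Submodule ℝ (Euc d)} (hW : W ≠ ⊥) (v : Euc d) :
    sSup {r : ℝ | ∃ w ∈ W, ‖w‖ = 1 ∧ r = (inner ℝ v w : ℝ)}
      = ‖(Submodule.orthogonalProjectionOnto W v : Euc d)‖ := by
  set pv : Euc d := (Submodule.orthogonalProjectionOnto W v : Euc d) with hpv
  by_cases h0 : pv = 0
  · have hset : {r : ℝ | ∃ w ∈ W, ‖w‖ = 1 ∧ r = (inner ℝ v w : ℝ)} = {0} := by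
      ext r
      simp only [Set.mem_setOf_eq, Set.mem_singleton_iff]
      constructor
      · rintro ⟨w, hwW, hw1, rfl⟩
        rw [inner_proj W v w hwW, ← hpv, h0, inner_zero_left]
      · rintro rfl
        obtain ⟨w, hwW, hw1⟩ := exists_unit hW
        exact ⟨w, hwW, hw1, by rw [inner_proj W v w hwW, ← hpv, h0, inner_zero_left]⟩
    rw [hset, csSup_singleton, h0, norm_zero]
  · have hb : ‖pv‖ ≠ 0 := norm_ne_zero_iff.2 h0
    apply IsGreatest.csSup_eq
    constructor
    · refine ⟨‖pv‖⁻¹ • pv, W.smul_mem _ (Submodule.orthogonalProjectionOnto W v).2, ?_, ?_⟩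
      · rw [norm_smul, norm_inv, norm_norm]; field_simp
      · rw [real_inner_smul_right, inner_self_proj]
        field_simp [sq]
        rfl
    · rintro r ⟨w, hwW, hw1, rfl⟩
      calc (inner ℝ v w : ℝ) = inner ℝ pv w := inner_proj W v w hwW
        _ ≤ ‖pv‖ * ‖w‖ := real_inner_le_norm pv w
        _ = ‖pv‖ := by rw [hw1, mul_one]

def projSet (V W : Submodule ℝ (Euc d)) : Set ℝ :=
  {c : ℝ | ∃ v ∈ V, ‖v‖ = 1 ∧ c = ‖(Submodule.orthogonalProjectionOnto W v : Euc d)‖}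

lemma subAngle_eq (V : Submodule ℝ (Euc d)) {W : Submodule ℝ (Euc d)} (hW : W ≠ ⊥) :
    subAngle V W = Real.arccos (sInf (projSet V W)) := by
  unfold subAngle projSet
  congr 2
  ext c
  exact exists_congr fun v => and_congr_right fun _ => and_congr_right fun _ =>
    by rw [sSup_inner hW v]

lemma projSet_nonneg {V W : Submodule ℝ (Euc d)} : ∀ c ∈ projSet V W, 0 ≤ c := by
  rintro c ⟨v, -, -, rfl⟩; exact norm_nonneg _

lemma projSet_bddBelow {V W : Submodule ℝ (Euc d)} : BddBelow (projSet V W) :=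
  ⟨0, fun c hc => projSet_nonneg c hc⟩

lemma projSet_nonempty {V : Submodule ℝ (Euc d)} (W : Submodule ℝ (Euc d)) (hV : V ≠ ⊥) :
    (projSet V W).Nonempty := by
  obtain ⟨v, hvV, hv1⟩ := exists_unit hV
  exact ⟨_, v, hvV, hv1, rfl⟩

lemma sInf_projSet_nonneg (V W : Submodule ℝ (Euc d)) : 0 ≤ sInf (projSet V W) := by
  by_cases h : (projSet V W).Nonempty
  · exact le_csInf h projSet_nonneg
  · rw [Set.not_nonempty_iff_eq_empty.1 h, Real.sInf_empty]

lemma isLeast_projSet {V : Submodule ℝ (Euc d)} (W : Submodule ℝ (Euc d)) (hV : V ≠ ⊥) :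
    IsLeast (projSet V W) (sInf (projSet V W)) := by
  have hcomp : IsCompact (projSet V W) := by
    have h1 : IsCompact ((V : Set (Euc d)) ∩ Metric.sphere 0 1) :=
      (isCompact_sphere (0 : Euc d) 1).inter_left V.closed_of_finiteDimensional
    have h2 : projSet V W =
        (fun v : Euc d => ‖(Submodule.orthogonalProjectionOnto W v : Euc d)‖) ''
          ((V : Set (Euc d)) ∩ Metric.sphere 0 1) := by
      ext c
      simp only [projSet, Set.mem_image, Set.mem_inter_iff, Set.mem_setOf_eq,
        mem_sphere_iff_norm, sub_zero, SetLike.mem_coe]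
      constructor
      · rintro ⟨v, hvV, hv1, rfl⟩; exact ⟨v, ⟨hvV, hv1⟩, rfl⟩
      · rintro ⟨v, ⟨hvV, hv1⟩, rfl⟩; exact ⟨v, hvV, hv1, rfl⟩
    rw [h2]
    exact h1.image (continuous_norm.comp ((Submodule.orthogonalProjectionOnto W).continuous.subtype_val))
  exact ⟨hcomp.sInf_mem (projSet_nonempty W hV), fun c hc => csInf_le projSet_bddBelow hc⟩

end AngleAux

namespace AngleAux
variable {d : ℕ}

/-- Key pointwise estimate: `∠(u, W) ≤ ∠(u,v) + ∠(v, W)` for unit vectors. -/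
lemma key_estimate (W : Submodule ℝ (Euc d)) {u v : Euc d} (hu : ‖u‖ = 1) (hv : ‖v‖ = 1)
    (ha0 : 0 ≤ (inner ℝ u v : ℝ)) :
    Real.arccos ‖(Submodule.orthogonalProjectionOnto W u : Euc d)‖ ≤
      Real.arccos (inner ℝ u v : ℝ) + Real.arccos ‖(Submodule.orthogonalProjectionOnto W v : Euc d)‖ := by
  set a : ℝ := (inner ℝ u v : ℝ) with hadef
  set pu : Euc d := (Submodule.orthogonalProjectionOnto W u : Euc d) with hpudef
  set pv : Euc d := (Submodule.orthogonalProjectionOnto W v : Euc d) with hpvdef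
  set b : ℝ := ‖pv‖ with hbdef
  have ha1 : a ≤ 1 := by
    have := real_inner_le_norm u v
    rw [hu, hv, one_mul] at this
    exact this
  have hb0 : 0 ≤ b := norm_nonneg _
  have hb1 : b ≤ 1 := by rw [hbdef, ← hv]; exact norm_proj_le W v
  set α : ℝ := Real.arccos a with hα
  set β : ℝ := Real.arccos b with hβ
  rcases le_or_gt (Real.pi / 2) (α + β) with hs | hs
  · exact le_trans (Real.arccos_le_pi_div_two.2 (norm_nonneg _)) hs
  · -- α + β < π/2
    have hbpos : 0 < b := by
      rcases lt_or_eq_of_le hb0 with h | h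
      · exact h
      · exfalso
        have : β = Real.pi / 2 := by rw [hβ, ← h, Real.arccos_zero]
        have := Real.arccos_nonneg a
        rw [← hα] at this
        linarith
    have hpvne : pv ≠ 0 := by
      intro h; rw [hbdef, h, norm_zero] at hbpos; exact lt_irrefl _ hbpos
    -- inner products
    have hvv : (inner ℝ v v : ℝ) = 1 := by rw [real_inner_self_eq_norm_sq, hv]; norm_num
    have huu : (inner ℝ u u : ℝ) = 1 := by rw [real_inner_self_eq_norm_sq, hu]; norm_num
    have hvpv : (inner ℝ v pv : ℝ) = b ^ 2 := inner_self_proj W v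
    have hvu : (inner ℝ v u : ℝ) = a := by rw [real_inner_comm]
    have hpvv : (inner ℝ pv v : ℝ) = b ^ 2 := by rw [real_inner_comm]; exact hvpv
    have hpvpv : (inner ℝ pv pv : ℝ) = b ^ 2 := by rw [real_inner_self_eq_norm_sq, hbdef]
    set u' : Euc d := u - a • v with hu'
    set z : Euc d := pv - (b ^ 2) • v with hz
    have hnu' : ‖u'‖ ^ 2 = 1 - a ^ 2 := by
      rw [← real_inner_self_eq_norm_sq, hu']
      simp only [inner_sub_left, inner_sub_right, real_inner_smul_left, real_inner_smul_right]
      rw [huu, hvv, hvu]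
      ring
    have hnz : ‖z‖ ^ 2 = b ^ 2 * (1 - b ^ 2) := by
      rw [← real_inner_self_eq_norm_sq, hz]
      simp only [inner_sub_left, inner_sub_right, real_inner_smul_left, real_inner_smul_right]
      rw [hpvpv, hvv, hpvv, hvpv]
      ring
    have hupv : (inner ℝ u pv : ℝ) = (inner ℝ u' z : ℝ) + a * b ^ 2 := by
      rw [hu', hz]
      simp only [inner_sub_left, inner_sub_right, real_inner_smul_left, real_inner_smul_right]
      rw [hvpv, hvv, ← hadef]
      ring
    have hu'z : |(inner ℝ u' z : ℝ)| ≤ Real.sqrt (1 - a ^ 2) * (b * Real.sqrt (1 - b ^ 2)) := by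
      have h1 : |(inner ℝ u' z : ℝ)| ≤ ‖u'‖ * ‖z‖ := abs_real_inner_le_norm u' z
      have h2 : ‖u'‖ = Real.sqrt (1 - a ^ 2) := by
        rw [← hnu', Real.sqrt_sq (norm_nonneg _)]
      have h3 : ‖z‖ = b * Real.sqrt (1 - b ^ 2) := by
        rw [← Real.sqrt_sq (norm_nonneg z), hnz, Real.sqrt_mul (sq_nonneg b),
          Real.sqrt_sq hb0]
      rw [h2, h3] at h1
      exact h1
    -- the candidate unit vector in W
    set w : Euc d := b⁻¹ • pv with hw
    have hwW : w ∈ W := W.smul_mem _ (Submodule.orthogonalProjectionOnto W v).2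
    have hw1 : ‖w‖ = 1 := by
      rw [hw, norm_smul, norm_inv, Real.norm_eq_abs, abs_of_pos hbpos, ← hbdef]
      field_simp
    have hcos : Real.cos (α + β) = a * b - Real.sqrt (1 - a ^ 2) * Real.sqrt (1 - b ^ 2) := by
      rw [Real.cos_add, hα, hβ, Real.cos_arccos (by linarith) ha1,
        Real.cos_arccos (by linarith) hb1, Real.sin_arccos, Real.sin_arccos]
    have hiw : Real.cos (α + β) ≤ (inner ℝ u w : ℝ) := by
      have h4 : (inner ℝ u w : ℝ) = b⁻¹ * (inner ℝ u pv : ℝ) := by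
        rw [hw, real_inner_smul_right]
      have h5 : (inner ℝ u' z : ℝ) ≥ -(Real.sqrt (1 - a ^ 2) * (b * Real.sqrt (1 - b ^ 2))) :=
        neg_le_of_abs_le hu'z
      rw [h4, hupv, hcos]
      rw [ge_iff_le, neg_le] at h5
      have hbinv : 0 < b⁻¹ := inv_pos.2 hbpos
      have : b⁻¹ * (inner ℝ u' z + a * b ^ 2) ≥
          b⁻¹ * (-(Real.sqrt (1 - a ^ 2) * (b * Real.sqrt (1 - b ^ 2))) + a * b ^ 2) := by
        apply mul_le_mul_of_nonneg_left _ hbinv.le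
        have := neg_le_of_abs_le hu'z
        linarith
      refine le_trans (le_of_eq ?_) this
      field_simp
      ring
    have hpu : Real.cos (α + β) ≤ ‖pu‖ := by
      refine le_trans hiw ?_
      calc (inner ℝ u w : ℝ) = inner ℝ pu w := inner_proj W u w hwW
        _ ≤ ‖pu‖ * ‖w‖ := real_inner_le_norm pu w
        _ = ‖pu‖ := by rw [hw1, mul_one]
    have hα0 : (0:ℝ) ≤ α := by rw [hα]; exact Real.arccos_nonneg a
    have hβ0 : (0:ℝ) ≤ β := by rw [hβ]; exact Real.arccos_nonneg b
    calc Real.arccos ‖pu‖ ≤ Real.arccos (Real.cos (α + β)) := arccos_anti hpu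
      _ = α + β := Real.arccos_cos (by linarith) (by linarith [Real.pi_pos])

end AngleAux

namespace AngleAux
variable {d : ℕ}

lemma subAngle_le_pi (V W : Submodule ℝ (Euc d)) : subAngle V W ≤ Real.pi :=
  Real.arccos_le_pi _

lemma subAngle_nonneg (V W : Submodule ℝ (Euc d)) : 0 ≤ subAngle V W :=
  Real.arccos_nonneg _

/-- Triangle inequality for the largest principal angle. -/
lemma subAngle_triangle (U V W : Submodule ℝ (Euc d)) (hU : U ≠ ⊥) (hV : V ≠ ⊥) (hW : W ≠ ⊥) :
    subAngle U W ≤ subAngle U V + subAngle V W := by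
  rw [subAngle_eq U hW, subAngle_eq U hV, subAngle_eq V hW]
  obtain ⟨hmem, -⟩ := isLeast_projSet (V := U) W hU
  obtain ⟨u₀, hu₀U, hu₀1, heq⟩ := hmem
  rw [heq]
  by_cases hp : (Submodule.orthogonalProjectionOnto V u₀ : Euc d) = 0
  · -- the angle to V is already π/2
    have h1 : sInf (projSet U V) ≤ 0 := by
      have : (0:ℝ) ∈ projSet U V := ⟨u₀, hu₀U, hu₀1, by rw [hp, norm_zero]⟩
      exact csInf_le projSet_bddBelow this
    have h2 : sInf (projSet U V) = 0 := le_antisymm h1 (sInf_projSet_nonneg U V)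
    rw [h2, Real.arccos_zero]
    have h3 : Real.arccos ‖(Submodule.orthogonalProjectionOnto W u₀ : Euc d)‖ ≤ Real.pi / 2 :=
      Real.arccos_le_pi_div_two.2 (norm_nonneg _)
    have h4 : 0 ≤ Real.arccos (sInf (projSet V W)) := Real.arccos_nonneg _
    linarith
  · set p : Euc d := (Submodule.orthogonalProjectionOnto V u₀ : Euc d) with hpdef
    have hpnorm : ‖p‖ ≠ 0 := norm_ne_zero_iff.2 hp
    set v : Euc d := ‖p‖⁻¹ • p with hvdef
    have hvV : v ∈ V := V.smul_mem _ (Submodule.orthogonalProjectionOnto V u₀).2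
    have hv1 : ‖v‖ = 1 := by
      rw [hvdef, norm_smul, norm_inv, norm_norm]; field_simp
    have hinner : (inner ℝ u₀ v : ℝ) = ‖p‖ := by
      rw [hvdef, real_inner_smul_right]
      have hup : (inner ℝ u₀ p : ℝ) = ‖p‖ ^ 2 := inner_self_proj V u₀
      rw [hup]
      field_simp [sq]
    have hkey := key_estimate W hu₀1 hv1 (by rw [hinner]; exact norm_nonneg p)
    rw [hinner] at hkey
    refine le_trans hkey (add_le_add ?_ ?_)
    · exact arccos_anti (csInf_le projSet_bddBelow ⟨u₀, hu₀U, hu₀1, rfl⟩)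
    · exact arccos_anti (csInf_le projSet_bddBelow ⟨v, hvV, hv1, rfl⟩)

set_option maxHeartbeats 1000000 in
/-- One-sided comparison of the minimal projections, via adjoints. -/
lemma sInf_projSet_le (V W : Submodule ℝ (Euc d)) (hV : V ≠ ⊥) (hW : W ≠ ⊥)
    (hdim : Module.finrank ℝ V = Module.finrank ℝ W) :
    sInf (projSet W V) ≤ sInf (projSet V W) := by
  set c : ℝ := sInf (projSet W V) with hc
  rcases le_or_gt c 0 with h | hcpos
  · exact le_trans h (sInf_projSet_nonneg V W)
  · -- S : W →L[ℝ] V, w ↦ P_V w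
    set S : W →L[ℝ] V := (Submodule.orthogonalProjectionOnto V).comp W.subtypeL with hS
    have hSlow : ∀ w : W, c * ‖w‖ ≤ ‖S w‖ := by
      intro w
      rcases eq_or_ne w 0 with rfl | hw0
      · simp
      · have hnw : ‖(w : Euc d)‖ ≠ 0 := by
          simpa using hw0
        have hmem : ‖(Submodule.orthogonalProjectionOnto V ((‖(w:Euc d)‖⁻¹ • (w:Euc d))) : Euc d)‖
            ∈ projSet W V := by
          refine ⟨_, W.smul_mem _ w.2, ?_, rfl⟩
          rw [norm_smul, norm_inv, norm_norm]; field_simp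
        have h1 : c ≤ ‖(Submodule.orthogonalProjectionOnto V ((‖(w:Euc d)‖⁻¹ • (w:Euc d))) : Euc d)‖ :=
          csInf_le projSet_bddBelow hmem
        have h2 : (Submodule.orthogonalProjectionOnto V ((‖(w:Euc d)‖⁻¹ • (w:Euc d))) : Euc d)
            = ‖(w:Euc d)‖⁻¹ • (Submodule.orthogonalProjectionOnto V (w:Euc d) : Euc d) := by
          rw [map_smul]; rfl
        rw [h2, norm_smul, norm_inv, norm_norm] at h1
        have h3 : ‖S w‖ = ‖(Submodule.orthogonalProjectionOnto V (w:Euc d) : Euc d)‖ := rfl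
        have h4 : ‖w‖ = ‖(w : Euc d)‖ := rfl
        rw [h3, h4]
        have hnwpos : 0 < ‖(w:Euc d)‖ := lt_of_le_of_ne (norm_nonneg _) (Ne.symm hnw)
        calc c * ‖(w:Euc d)‖ ≤ (‖(w:Euc d)‖⁻¹ * ‖(Submodule.orthogonalProjectionOnto V (w:Euc d) : Euc d)‖)
              * ‖(w:Euc d)‖ := by
              exact mul_le_mul_of_nonneg_right h1 (norm_nonneg _)
          _ = ‖(Submodule.orthogonalProjectionOnto V (w:Euc d) : Euc d)‖ := by field_simp
    have hSinj : Function.Injective S := by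
      intro x y hxy
      have h0 : S (x - y) = 0 := by rw [map_sub, hxy, sub_self]
      by_contra hne
      have : x - y ≠ 0 := sub_ne_zero.2 hne
      have h1 : c * ‖x - y‖ ≤ 0 := by rw [← norm_zero (E := V), ← h0]; exact hSlow (x - y)
      have h2 : 0 < ‖x - y‖ := norm_pos_iff.2 this
      nlinarith
    -- upgrade to a continuous linear equiv
    have hdim' : Module.finrank ℝ W = Module.finrank ℝ V := hdim.symm
    set e : W ≃ₗ[ℝ] V := LinearMap.linearEquivOfInjective (S : W →ₗ[ℝ] V) hSinj hdim' with he
    set e' : W ≃L[ℝ] V := e.toContinuousLinearEquiv with he'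
    have he'app : ∀ w : W, e' w = S w := fun w => rfl
    set R : V →L[ℝ] W := (e'.symm : V →L[ℝ] W) with hR
    have hSR : ∀ y : V, S (R y) = y := by
      intro y
      have h := e'.apply_symm_apply y
      rw [he'app (e'.symm y)] at h
      exact h
    have hRnorm : ‖R‖ ≤ c⁻¹ := by
      apply ContinuousLinearMap.opNorm_le_bound _ (by positivity)
      intro y
      have h1 := hSlow (R y)
      rw [hSR y] at h1
      rw [inv_mul_eq_div, le_div_iff₀ hcpos, mul_comm]
      exact h1
    -- T = adjoint S
    set T : V →L[ℝ] W := (Submodule.orthogonalProjectionOnto W).comp V.subtypeL with hT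
    have hadj : T = ContinuousLinearMap.adjoint S := by
      rw [ContinuousLinearMap.eq_adjoint_iff]
      intro x y
      rw [Submodule.coe_inner, Submodule.coe_inner]
      have h3 : ((T x : Euc d)) = (Submodule.orthogonalProjectionOnto W (x : Euc d) : Euc d) := rfl
      have h4 : ((S y : Euc d)) = (Submodule.orthogonalProjectionOnto V (y : Euc d) : Euc d) := rfl
      have hR2 : (inner ℝ ((x : Euc d)) ((Submodule.orthogonalProjectionOnto V (y : Euc d) : Euc d)) : ℝ)
          = inner ℝ ((x : Euc d)) ((y : Euc d)) := by
        rw [real_inner_comm, ← inner_proj V (y : Euc d) (x : Euc d) x.2, real_inner_comm]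
      rw [h3, h4, hR2, ← inner_proj W (x : Euc d) (y : Euc d) y.2]
    -- X := adjoint R is a left inverse of T with norm ≤ c⁻¹
    set X : W →L[ℝ] V := ContinuousLinearMap.adjoint R with hX
    have hXT : ∀ v : V, X (T v) = v := by
      intro v
      have h1 : X ∘L T = ContinuousLinearMap.adjoint (S ∘L R) := by
        rw [hadj, hX, ← ContinuousLinearMap.adjoint_comp]
      have h2 : S ∘L R = ContinuousLinearMap.id ℝ V := ContinuousLinearMap.ext hSR
      have h3 : X ∘L T = ContinuousLinearMap.id ℝ V := by
        rw [h1, h2, ContinuousLinearMap.adjoint_id]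
      calc X (T v) = (X ∘L T) v := rfl
        _ = v := by rw [h3]; rfl
    have hXnorm : ‖X‖ ≤ c⁻¹ := by
      rw [hX]
      calc ‖ContinuousLinearMap.adjoint R‖ = ‖R‖ := by
            rw [ContinuousLinearMap.adjoint.norm_map R]
        _ ≤ c⁻¹ := hRnorm
    -- conclude: every element of projSet V W is ≥ c
    apply le_csInf (projSet_nonempty W hV)
    rintro r ⟨v, hvV, hv1, rfl⟩
    set vv : V := ⟨v, hvV⟩ with hvv
    have h1 : ‖T vv‖ = ‖(Submodule.orthogonalProjectionOnto W v : Euc d)‖ := rfl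
    have h2 : (1:ℝ) = ‖vv‖ := by rw [← hv1]; rfl
    have h3 : ‖vv‖ = ‖X (T vv)‖ := by rw [hXT]
    have h4 : ‖X (T vv)‖ ≤ ‖X‖ * ‖T vv‖ := X.le_opNorm _
    have h5 : ‖X‖ * ‖T vv‖ ≤ c⁻¹ * ‖T vv‖ :=
      mul_le_mul_of_nonneg_right hXnorm (norm_nonneg _)
    have h6 : (1:ℝ) ≤ c⁻¹ * ‖T vv‖ := by
      rw [h2, h3]; exact le_trans h4 h5
    rw [← h1]
    calc c = c * 1 := (mul_one c).symm
      _ ≤ c * (c⁻¹ * ‖T vv‖) := mul_le_mul_of_nonneg_left h6 hcpos.le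
      _ = ‖T vv‖ := by field_simp

lemma subAngle_comm (V W : Submodule ℝ (Euc d)) (hV : V ≠ ⊥) (hW : W ≠ ⊥)
    (hdim : Module.finrank ℝ V = Module.finrank ℝ W) :
    subAngle V W = subAngle W V := by
  rw [subAngle_eq V hW, subAngle_eq W hV]
  congr 1
  exact le_antisymm (sInf_projSet_le W V hW hV hdim.symm) (sInf_projSet_le V W hV hW hdim)

end AngleAux

namespace AngleAux
variable {d : ℕ}

lemma isUnit_PhiF {A : ℕ → (Euc d →L[ℝ] Euc d)} (hA : ∀ n, IsUnit (A n)) (m n : ℕ) :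
    IsUnit (PhiF A m n) := by
  induction n with
  | zero => exact isUnit_one
  | succ n ih =>
    have : PhiF A m (n + 1) = A (m + n) * PhiF A m n := rfl
    rw [this]
    exact (hA _).mul ih

lemma isUnit_Phi0 {A : ℕ → (Euc d →L[ℝ] Euc d)} (hA : ∀ n, IsUnit (A n)) (j : ℕ) :
    IsUnit (Phi A j 0) := by
  unfold Phi
  rw [if_pos (Nat.zero_le j)]
  exact isUnit_PhiF hA 0 _

lemma finrank_map_unit {T : Euc d →L[ℝ] Euc d} (hT : IsUnit T) (V : Submodule ℝ (Euc d)) :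
    Module.finrank ℝ (V.map (T : Euc d →ₗ[ℝ] Euc d)) = Module.finrank ℝ V := by
  obtain ⟨u, rfl⟩ := hT
  apply le_antisymm
  · exact Submodule.finrank_map_le _ _
  · have h1 : V = ((V.map ((u : Euc d →L[ℝ] Euc d) : Euc d →ₗ[ℝ] Euc d)).map
        ((↑u⁻¹ : Euc d →L[ℝ] Euc d) : Euc d →ₗ[ℝ] Euc d)) := by
      ext x
      simp only [Submodule.mem_map]
      constructor
      · intro hx
        exact ⟨(u : Euc d →L[ℝ] Euc d) x, ⟨x, hx, rfl⟩, by
          have : ((↑u⁻¹ : Euc d →L[ℝ] Euc d) * (u : Euc d →L[ℝ] Euc d)) x = x := by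
            rw [u.inv_mul]; rfl
          exact this⟩
      · rintro ⟨y, ⟨x', hx', rfl⟩, rfl⟩
        have : ((↑u⁻¹ : Euc d →L[ℝ] Euc d) * (u : Euc d →L[ℝ] Euc d)) x' = x' := by
          rw [u.inv_mul]; rfl
        rw [show ((↑u⁻¹ : Euc d →L[ℝ] Euc d) : Euc d →ₗ[ℝ] Euc d)
            (((u : Euc d →L[ℝ] Euc d) : Euc d →ₗ[ℝ] Euc d) x') = x' from this]
        exact hx'
    conv_lhs => rw [h1]
    exact Submodule.finrank_map_le _ _

/-- Generic lemma: bounded sequences whose difference tends to `0` have the same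
limsup and liminf. -/
lemma limsup_liminf_eq_of_tendsto_sub (f g : ℕ → ℝ) (M : ℝ)
    (hf : ∀ n, |f n| ≤ M) (hg : ∀ n, |g n| ≤ M)
    (h : Tendsto (fun n => f n - g n) atTop (nhds 0)) :
    limsup f atTop = limsup g atTop ∧ liminf f atTop = liminf g atTop := by
  have hbdd : ∀ (u : ℕ → ℝ), (∀ n, |u n| ≤ M) → IsBoundedUnder (· ≤ ·) atTop u :=
    fun u hu => isBoundedUnder_of ⟨M, fun n => (abs_le.1 (hu n)).2⟩
  have hbdd' : ∀ (u : ℕ → ℝ), (∀ n, |u n| ≤ M) → IsBoundedUnder (· ≥ ·) atTop u :=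
    fun u hu => isBoundedUnder_of ⟨-M, fun n => (abs_le.1 (hu n)).1⟩
  have hcob : ∀ (u : ℕ → ℝ), (∀ n, |u n| ≤ M) → IsCoboundedUnder (· ≤ ·) atTop u :=
    fun u hu => (hbdd' u hu).isCoboundedUnder_le
  have hcob' : ∀ (u : ℕ → ℝ), (∀ n, |u n| ≤ M) → IsCoboundedUnder (· ≥ ·) atTop u :=
    fun u hu => (hbdd u hu).isCoboundedUnder_ge
  have key : ∀ (u v : ℕ → ℝ), (∀ n, |u n| ≤ M) → (∀ n, |v n| ≤ M) →
      Tendsto (fun n => u n - v n) atTop (nhds 0) →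
      limsup u atTop ≤ limsup v atTop := by
    intro u v hu hv huv
    apply le_of_forall_pos_le_add
    intro ε hε
    have hev : ∀ᶠ n in atTop, u n ≤ v n + ε := by
      have := huv.eventually (eventually_lt_nhds hε)
      filter_upwards [this] with n hn
      linarith
    calc limsup u atTop ≤ limsup (fun n => v n + ε) atTop :=
          limsup_le_limsup hev (hcob u hu)
            (isBoundedUnder_of ⟨M + ε, fun n => by have := (abs_le.1 (hv n)).2; linarith⟩)
      _ = limsup v atTop + ε :=
          limsup_add_const atTop v ε (hbdd v hv) (hcob v hv)
  have key' : ∀ (u v : ℕ → ℝ), (∀ n, |u n| ≤ M) → (∀ n, |v n| ≤ M) →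
      Tendsto (fun n => u n - v n) atTop (nhds 0) →
      liminf v atTop ≤ liminf u atTop := by
    intro u v hu hv huv
    have h2 : ∀ ε : ℝ, 0 < ε → liminf v atTop ≤ liminf u atTop + ε := by
      intro ε hε
      have hev : ∀ᶠ n in atTop, v n ≤ u n + ε := by
        have := huv.eventually (eventually_gt_nhds (by linarith : -ε < (0:ℝ)))
        filter_upwards [this] with n hn
        linarith
      calc liminf v atTop ≤ liminf (fun n => u n + ε) atTop :=
            liminf_le_liminf hev (hbdd' v hv)
              ((isBoundedUnder_of ⟨M + ε, fun n =>
                by have := (abs_le.1 (hu n)).2; linarith⟩).isCoboundedUnder_ge)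
        _ = liminf u atTop + ε :=
            liminf_add_const atTop u ε (hcob' u hu) (hbdd' u hu)
    exact le_of_forall_pos_le_add h2
  have hgf : Tendsto (fun n => g n - f n) atTop (nhds 0) := by
    have := h.neg
    rw [neg_zero] at this
    convert this using 2 with n
    ring
  exact ⟨le_antisymm (key f g hf hg h) (key g f hg hf hgf),
    le_antisymm (key' g f hg hf hgf) (key' f g hf hg h)⟩

lemma geom_partial_bound {q : ℝ} (hq0 : 0 ≤ q) (hq1 : q < 1) (n : ℕ) :
    ∑ j ∈ Finset.Icc 1 n, q ^ (j - 1) ≤ (1 - q)⁻¹ := by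
  have heq : ∑ j ∈ Finset.Icc 1 n, q ^ (j - 1) = ∑ i ∈ Finset.range n, q ^ i := by
    induction n with
    | zero => simp
    | succ n ih =>
      rw [Finset.sum_Icc_succ_top (Nat.one_le_iff_ne_zero.2 (Nat.succ_ne_zero n)),
        Finset.sum_range_succ, ih]
      simp
  rw [heq]
  exact sum_le_hasSum _ (fun i _ => pow_nonneg hq0 i) (hasSum_geometric_of_lt_one hq0 hq1)

end AngleAux

open AngleAux in
/-- If the angles between the iterates of two `s`-dimensional subspaces `V`
and `W` decay geometrically, then the averaged angle sums of `V` and `W` have the same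
`limsup` and the same `liminf`. -/
theorem limsup_angSum_eq_of_geometric_closeness {d : ℕ}
    (A : ℕ → (Euc d →L[ℝ] Euc d)) (hA : ∀ n, IsUnit (A n))
    (s : ℕ) (V W : Submodule ℝ (Euc d))
    (hV : Module.finrank ℝ V = s) (hW : Module.finrank ℝ W = s)
    (C q : ℝ) (hC : 0 ≤ C) (hq0 : 0 ≤ q) (hq1 : q < 1) (J : ℕ)
    (hclose : ∀ j : ℕ, J ≤ j →
      subAngle (V.map (Phi A j 0 : Euc d →ₗ[ℝ] Euc d)) (W.map (Phi A j 0 : Euc d →ₗ[ℝ] Euc d)) ≤ C * q ^ j) :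
    limsup (fun n : ℕ => angSum A V 1 n / n) atTop =
      limsup (fun n : ℕ => angSum A W 1 n / n) atTop ∧
    liminf (fun n : ℕ => angSum A V 1 n / n) atTop =
      liminf (fun n : ℕ => angSum A W 1 n / n) atTop := by
  rcases Nat.eq_zero_or_pos s with hs0 | hs
  · have hV0 : V = ⊥ := Submodule.finrank_eq_zero.1 (by rw [hV, hs0])
    have hW0 : W = ⊥ := Submodule.finrank_eq_zero.1 (by rw [hW, hs0])
    subst hV0
    rw [show W = (⊥ : Submodule ℝ (Euc d)) from hW0]
    exact ⟨rfl, rfl⟩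
  · set Vj : ℕ → Submodule ℝ (Euc d) := fun j => V.map (Phi A j 0 : Euc d →ₗ[ℝ] Euc d) with hVjdef
    set Wj : ℕ → Submodule ℝ (Euc d) := fun j => W.map (Phi A j 0 : Euc d →ₗ[ℝ] Euc d) with hWjdef
    have hVrank : ∀ j, Module.finrank ℝ (Vj j) = s := fun j => by
      rw [hVjdef]
      rw [finrank_map_unit (isUnit_Phi0 hA j) V, hV]
    have hWrank : ∀ j, Module.finrank ℝ (Wj j) = s := fun j => by
      rw [hWjdef]
      rw [finrank_map_unit (isUnit_Phi0 hA j) W, hW]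
    have hVne : ∀ j, Vj j ≠ ⊥ := by
      intro j h
      have h2 := Submodule.finrank_eq_zero.2 h
      rw [hVrank j] at h2
      omega
    have hWne : ∀ j, Wj j ≠ ⊥ := by
      intro j h
      have h2 := Submodule.finrank_eq_zero.2 h
      rw [hWrank j] at h2
      omega
    have hdiff : ∀ j, 1 ≤ j →
        |subAngle (Vj (j-1)) (Vj j) - subAngle (Wj (j-1)) (Wj j)|
          ≤ subAngle (Vj (j-1)) (Wj (j-1)) + subAngle (Vj j) (Wj j) := by
      intro j _
      have hd1 : Module.finrank ℝ (Vj (j-1)) = Module.finrank ℝ (Wj (j-1)) := by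
        rw [hVrank, hWrank]
      have hd2 : Module.finrank ℝ (Vj j) = Module.finrank ℝ (Wj j) := by
        rw [hVrank, hWrank]
      have t1 := subAngle_triangle (Vj (j-1)) (Wj (j-1)) (Vj j) (hVne _) (hWne _) (hVne _)
      have t2 := subAngle_triangle (Wj (j-1)) (Wj j) (Vj j) (hWne _) (hWne _) (hVne _)
      have t3 := subAngle_comm (Vj j) (Wj j) (hVne _) (hWne _) hd2
      have t4 := subAngle_triangle (Wj (j-1)) (Vj (j-1)) (Wj j) (hWne _) (hVne _) (hWne _)
      have t5 := subAngle_triangle (Vj (j-1)) (Vj j) (Wj j) (hVne _) (hVne _) (hWne _)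
      have t6 := subAngle_comm (Vj (j-1)) (Wj (j-1)) (hVne _) (hWne _) hd1
      rw [abs_le]
      constructor
      · linarith
      · linarith
    set K : ℝ := 2 * Real.pi * J + 2 * C * (1 - q)⁻¹ with hK
    have hsum : ∀ n : ℕ, |angSum A V 1 n - angSum A W 1 n| ≤ K := by
      intro n
      have e1 : angSum A V 1 n - angSum A W 1 n
          = ∑ j ∈ Finset.Icc 1 n,
              (subAngle (Vj (j-1)) (Vj j) - subAngle (Wj (j-1)) (Wj j)) := by
        rw [angSum, angSum, ← Finset.sum_sub_distrib]
      rw [e1]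
      calc |∑ j ∈ Finset.Icc 1 n,
              (subAngle (Vj (j-1)) (Vj j) - subAngle (Wj (j-1)) (Wj j))|
          ≤ ∑ j ∈ Finset.Icc 1 n,
              |subAngle (Vj (j-1)) (Vj j) - subAngle (Wj (j-1)) (Wj j)| :=
            Finset.abs_sum_le_sum_abs _ _
        _ ≤ ∑ j ∈ Finset.Icc 1 n,
              ((if j ≤ J then 2 * Real.pi else 0) + 2 * C * q ^ (j - 1)) := by
            apply Finset.sum_le_sum
            intro j hj
            have hj1 : 1 ≤ j := (Finset.mem_Icc.1 hj).1
            have hd := hdiff j hj1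
            by_cases hjJ : j ≤ J
            · rw [if_pos hjJ]
              have b1 : subAngle (Vj (j-1)) (Wj (j-1)) ≤ Real.pi := subAngle_le_pi _ _
              have b2 : subAngle (Vj j) (Wj j) ≤ Real.pi := subAngle_le_pi _ _
              have b3 : (0:ℝ) ≤ 2 * C * q ^ (j-1) := by positivity
              linarith
            · rw [if_neg hjJ]
              push_neg at hjJ
              have c1 : subAngle (Vj (j-1)) (Wj (j-1)) ≤ C * q ^ (j-1) :=
                hclose (j-1) (by omega)
              have c2 : subAngle (Vj j) (Wj j) ≤ C * q ^ j := hclose j (by omega)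
              have hqj : C * q ^ j ≤ C * q ^ (j-1) := by
                have hle : q ^ j ≤ q ^ (j-1) :=
                  pow_le_pow_of_le_one hq0 hq1.le (by omega)
                exact mul_le_mul_of_nonneg_left hle hC
              linarith
        _ ≤ K := by
            rw [Finset.sum_add_distrib, hK]
            have hA1 : ∑ j ∈ Finset.Icc 1 n, (if j ≤ J then 2 * Real.pi else 0)
                ≤ 2 * Real.pi * J := by
              rw [← Finset.sum_filter]
              have hsub : (Finset.Icc 1 n).filter (fun j => j ≤ J) ⊆ Finset.Icc 1 J := by
                intro j hj
                simp only [Finset.mem_filter, Finset.mem_Icc] at hj ⊢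
                omega
              calc ∑ _j ∈ (Finset.Icc 1 n).filter (fun j => j ≤ J), 2 * Real.pi
                  ≤ ∑ _j ∈ Finset.Icc 1 J, 2 * Real.pi :=
                    Finset.sum_le_sum_of_subset_of_nonneg hsub
                      (fun _ _ _ => by positivity)
                _ = (J : ℝ) * (2 * Real.pi) := by
                    rw [Finset.sum_const, Nat.card_Icc]
                    simp [nsmul_eq_mul]
                _ = 2 * Real.pi * J := by ring
            have hA2 : ∑ j ∈ Finset.Icc 1 n, 2 * C * q ^ (j-1)
                ≤ 2 * C * (1 - q)⁻¹ := by
              rw [← Finset.mul_sum]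
              exact mul_le_mul_of_nonneg_left (geom_partial_bound hq0 hq1 n) (by positivity)
            linarith
    have hFb : ∀ (U : Submodule ℝ (Euc d)) (n : ℕ), |angSum A U 1 n / n| ≤ Real.pi := by
      intro U n
      have h0 : 0 ≤ angSum A U 1 n := Finset.sum_nonneg fun j _ => subAngle_nonneg _ _
      have h1 : angSum A U 1 n ≤ n * Real.pi := by
        calc angSum A U 1 n ≤ ∑ _j ∈ Finset.Icc 1 n, Real.pi :=
              Finset.sum_le_sum fun j _ => subAngle_le_pi _ _
          _ = (n : ℝ) * Real.pi := by
              rw [Finset.sum_const, Nat.card_Icc]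
              simp [nsmul_eq_mul]
      rcases Nat.eq_zero_or_pos n with rfl | hn
      · simp [Real.pi_pos.le]
      · have hn' : (0:ℝ) < n := by exact_mod_cast hn
        rw [abs_of_nonneg (by positivity)]
        rw [div_le_iff₀ hn']
        linarith
    have htend : Tendsto
        (fun n : ℕ => angSum A V 1 n / n - angSum A W 1 n / n) atTop (nhds 0) := by
      apply squeeze_zero_norm _ (tendsto_const_div_atTop_nhds_zero_nat K)
      intro n
      rcases Nat.eq_zero_or_pos n with rfl | hn
      · simp
      · have hn' : (0:ℝ) < n := by exact_mod_cast hn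
        have e2 : angSum A V 1 n / n - angSum A W 1 n / n
            = (angSum A V 1 n - angSum A W 1 n) / n := div_sub_div_same _ _ _
        rw [e2, Real.norm_eq_abs, abs_div, abs_of_pos hn']
        exact (div_le_div_iff_of_pos_right hn').2 (hsum n)
    exact limsup_liminf_eq_of_tendsto_sub _ _ Real.pi (hFb V) (hFb W) htend
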